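/- For any unit vector q ∈ ℝ⁴, any ω ∈ ℝ, and any N ≥ 0, the real matrix Toeplitz(qqᵀ, qqᵀcos ω, ..., qqᵀcos Nω) + Hankel(−qqᵀsin Nω, ..., −qqᵀsin ω, 0, qqᵀsin ω, ..., qqᵀsin Nω) is positive semidefinite. -/

import Mathlib

open Matrix

/-- Block Toeplitz matrix with blocks `T 0, T 1, ..., T N` (transposed below the block
diagonal). -/
def blockToeplitz (d N : ℕ) (T : ℕ → Matrix (Fin d) (Fin d) ℝ) :
    Matrix (Fin (N + 1) × Fin d) (Fin (N + 1) × Fin d) ℝ :=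
  fun p q =>
    if p.1.1 ≤ q.1.1 then T (q.1.1 - p.1.1) p.2 q.2 else (T (p.1.1 - q.1.1))ᵀ p.2 q.2

/-- Block Hankel matrix with blocks `s 1, ..., s (2N+1)`: block `(j,k)` (1-indexed) is
`s (j+k-1)`. -/
def blockHankel (d N : ℕ) (s : ℕ → Matrix (Fin d) (Fin d) ℝ) :
    Matrix (Fin (N + 1) × Fin d) (Fin (N + 1) × Fin d) ℝ :=
  fun p q => s (p.1.1 + q.1.1 + 1) p.2 q.2


lemma key_trig (N ω j k : ℝ) :
    (Real.cos (j*ω - N*ω/2) + Real.sin (j*ω - N*ω/2)) *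
      (Real.cos (k*ω - N*ω/2) + Real.sin (k*ω - N*ω/2)) =
    Real.cos ((k - j) * ω) + Real.sin ((j + k - N) * ω) := by
  have h1 : (k - j) * ω = (k*ω - N*ω/2) - (j*ω - N*ω/2) := by ring
  have h2 : (j + k - N) * ω = (j*ω - N*ω/2) + (k*ω - N*ω/2) := by ring
  rw [h1, h2]
  generalize (j*ω - N*ω/2) = a
  generalize (k*ω - N*ω/2) = b
  rw [Real.cos_sub, Real.sin_add]
  ring

lemma psd_vecMulVec {n : Type*} [Fintype n] (v : n → ℝ) : (vecMulVec v v).PosSemidef := by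
  rw [posSemidef_iff_dotProduct_mulVec]
  constructor
  · ext i j; simp [vecMulVec_apply, mul_comm]
  · intro x
    have : star x ⬝ᵥ (vecMulVec v v) *ᵥ x = (v ⬝ᵥ x) * (v ⬝ᵥ x) := by
      simp [dotProduct, mulVec, vecMulVec_apply, Finset.sum_mul, Finset.mul_sum]
      congr 1; ext i; congr 1; ext j; ring
    rw [this]
    exact mul_self_nonneg _

/-- for a unit vector `q ∈ ℝ⁴` and any `ω`,
`Toeplitz(qqᵀ, qqᵀcos ω, ..., qqᵀcos Nω) + Hankel(−qqᵀsin Nω, ..., 0, ..., qqᵀsin Nω)`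
is positive semidefinite.  (Note `−sin((N+1−m)ω) = sin((m−(N+1))ω)`.) -/
theorem toeplitz_hankel_psd (N : ℕ) (q : Fin 4 → ℝ) (hq : ∑ i, q i ^ 2 = 1) (ω : ℝ) :
    (blockToeplitz 4 N (fun n => Real.cos (n * ω) • vecMulVec q q) +
      blockHankel 4 N (fun m =>
        Real.sin (((m : ℝ) - (N + 1)) * ω) • vecMulVec q q)).PosSemidef := by
  have hmain :
      (blockToeplitz 4 N (fun n => Real.cos (n * ω) • vecMulVec q q) +
        blockHankel 4 N (fun m =>
          Real.sin (((m : ℝ) - (N + 1)) * ω) • vecMulVec q q)) =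
      vecMulVec (fun p : Fin (N+1) × Fin 4 =>
          (Real.cos (p.1.1*ω - N*ω/2) + Real.sin (p.1.1*ω - N*ω/2)) * q p.2)
        (fun p => (Real.cos (p.1.1*ω - N*ω/2) + Real.sin (p.1.1*ω - N*ω/2)) * q p.2) := by
    ext p r
    obtain ⟨j, a⟩ := p
    obtain ⟨k, b⟩ := r
    simp only [blockToeplitz, blockHankel, Matrix.add_apply, vecMulVec_apply,
      Matrix.smul_apply, Matrix.transpose_apply, smul_eq_mul]
    have hH : ((((j:ℕ) + (k:ℕ) + 1 : ℕ) : ℝ) - (N + 1)) * ω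
        = ((j:ℕ) + (k:ℕ) - (N:ℝ)) * ω := by push_cast; ring
    rw [hH]
    have key := key_trig N ω (j:ℕ) (k:ℕ)
    by_cases h : (j:ℕ) ≤ (k:ℕ)
    · rw [if_pos h]
      have : (((k:ℕ) - (j:ℕ) : ℕ) : ℝ) = ((k:ℕ):ℝ) - ((j:ℕ):ℝ) := by
        push_cast [h]; ring
      rw [this]
      linear_combination (-(q a * q b)) * key
    · rw [if_neg h]
      push_neg at h
      have : (((j:ℕ) - (k:ℕ) : ℕ) : ℝ) = ((j:ℕ):ℝ) - ((k:ℕ):ℝ) := by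
        push_cast [h.le]; ring
      rw [this, show (((j:ℕ):ℝ) - (k:ℕ)) * ω = -((((k:ℕ):ℝ) - (j:ℕ)) * ω) by ring,
        Real.cos_neg]
      linear_combination (-(q a * q b)) * key
  rw [hmain]
  exact psd_vecMulVec _
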